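/- Let u be strictly convex and continuous on B₂(0) ⊆ ℝⁿ, and let u_k be convex functions converging to u uniformly on B₂(0). Fix p ∈ B₁(0) and 0 < δ < 1. Then there exists k₀ such that for all k ≥ k₀ and all 0 < r < 1, S^{u_k}_r(p) ⊆ S^u_{r+δ}(p), where S^v_r(p) = { x ∈ B₁(0) : v(x) < v(p) + sup_{y∈∂v(p)} (x−p)·y + r² }. -/

import Mathlib

open Metric Set Filter

/-- The subdifferential of `v` at `p`, with respect to the domain `B₂(0)`. -/
def subdiff {n : ℕ} (v : EuclideanSpace ℝ (Fin n) → ℝ) (p : EuclideanSpace ℝ (Fin n)) :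
    Set (EuclideanSpace ℝ (Fin n)) :=
  {y | ∀ x ∈ ball (0 : EuclideanSpace ℝ (Fin n)) 2, v p + (inner ℝ (x - p) y : ℝ) ≤ v x}

/-- The outer section `S^v_r(p)` defined via the subdifferential. -/
def outerSection {n : ℕ} (v : EuclideanSpace ℝ (Fin n) → ℝ) (r : ℝ)
    (p : EuclideanSpace ℝ (Fin n)) : Set (EuclideanSpace ℝ (Fin n)) :=
  {x ∈ ball (0 : EuclideanSpace ℝ (Fin n)) 1 |
    v x < v p + sSup ((fun y => (inner ℝ (x - p) y : ℝ)) '' subdiff v p) + r ^ 2}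

/-- A real-valued bound obtained from `∀ ε > 0, a ≤ b + ε`. -/
lemma le_of_forall_pos_le_add' {a b : ℝ} (h : ∀ ε : ℝ, 0 < ε → a ≤ b + ε) : a ≤ b := by
  by_contra hab
  push_neg at hab
  have := h ((a - b) / 2) (by linarith)
  linarith

/-- Norm bound on subgradients from a bound on `|v|` on the ball of radius `3/2`. -/
lemma subdiff_norm_le {n : ℕ} {v : EuclideanSpace ℝ (Fin n) → ℝ}
    {p : EuclideanSpace ℝ (Fin n)} (hp : ‖p‖ < 1) {C : ℝ}
    (hC : ∀ x ∈ closedBall (0 : EuclideanSpace ℝ (Fin n)) (3 / 2), |v x| ≤ C)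
    {y : EuclideanSpace ℝ (Fin n)} (hy : y ∈ subdiff v p) : ‖y‖ ≤ 4 * C := by
  have hC0 : 0 ≤ C := (abs_nonneg _).trans (hC 0 (by simp; norm_num))
  rcases eq_or_ne y 0 with rfl | hy0
  · simp; linarith
  · have hyn : (0 : ℝ) < ‖y‖ := norm_pos_iff.2 hy0
    set x : EuclideanSpace ℝ (Fin n) := p + (2 * ‖y‖)⁻¹ • y with hxdef
    have hsm : ‖(2 * ‖y‖)⁻¹ • y‖ = 1 / 2 := by
      rw [norm_smul, Real.norm_eq_abs, abs_of_pos (by positivity)]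
      field_simp
    have hxn : ‖x‖ ≤ 3 / 2 := by
      calc ‖x‖ ≤ ‖p‖ + ‖(2 * ‖y‖)⁻¹ • y‖ := norm_add_le _ _
        _ ≤ 3 / 2 := by rw [hsm]; linarith
    have hx2 : x ∈ ball (0 : EuclideanSpace ℝ (Fin n)) 2 := by
      rw [mem_ball, dist_zero_right]; linarith
    have key := hy x hx2
    have hxp : x - p = (2 * ‖y‖)⁻¹ • y := by rw [hxdef]; abel
    have hinner : (inner ℝ (x - p) y : ℝ) = ‖y‖ / 2 := by
      rw [hxp, real_inner_smul_left, real_inner_self_eq_norm_sq]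
      field_simp
    rw [hinner] at key
    have hvx : |v x| ≤ C := hC x (by rwa [mem_closedBall, dist_zero_right])
    have hvp : |v p| ≤ C := hC p (by rw [mem_closedBall, dist_zero_right]; linarith)
    have h1 := abs_le.1 hvx
    have h2 := abs_le.1 hvp
    linarith

/-- Existence of a subgradient for a convex continuous function at an interior point. -/
lemma subdiff_nonempty {n : ℕ} {v : EuclideanSpace ℝ (Fin n) → ℝ}
    (hv : ConvexOn ℝ (ball (0 : EuclideanSpace ℝ (Fin n)) 2) v)
    (hcv : ContinuousOn v (ball (0 : EuclideanSpace ℝ (Fin n)) 2))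
    {p : EuclideanSpace ℝ (Fin n)} (hp : p ∈ ball (0 : EuclideanSpace ℝ (Fin n)) 2) :
    (subdiff v p).Nonempty := by
  classical
  set A : Set (EuclideanSpace ℝ (Fin n) × ℝ) := {q | q.1 ∈ ball (0 : EuclideanSpace ℝ (Fin n)) 2 ∧ v q.1 < q.2} with hAdef
  have hAconv : Convex ℝ A := by
    rintro ⟨x, s⟩ ⟨hx, hxs⟩ ⟨x', s'⟩ ⟨hx', hxs'⟩ a b ha hb hab
    constructor
    · exact (convex_ball (0 : EuclideanSpace ℝ (Fin n)) 2) hx hx' ha hb hab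
    · have hcvx := hv.2 hx hx' ha hb hab
      simp only [smul_eq_mul] at hcvx ⊢
      have h1 : a * v x ≤ a * s := mul_le_mul_of_nonneg_left hxs.le ha
      have h2 : b * v x' ≤ b * s' := mul_le_mul_of_nonneg_left hxs'.le hb
      have hsum : a * v x + b * v x' < a * s + b * s' := by
        rcases ha.lt_or_eq with ha' | ha'
        · nlinarith
        · have hb1 : b = 1 := by linarith
          nlinarith
      calc v (a • x + b • x') ≤ a * v x + b * v x' := hcvx
        _ < a * s + b * s' := hsum
  have hAopen : IsOpen A := by
    rw [isOpen_iff_mem_nhds]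
    rintro ⟨x, s⟩ ⟨hx, hxs⟩
    have hvx : ContinuousAt v x := hcv.continuousAt (isOpen_ball.mem_nhds hx)
    have hg : ContinuousAt (fun q : EuclideanSpace ℝ (Fin n) × ℝ => q.2 - v q.1) (x, s) :=
      ContinuousAt.sub continuousAt_snd (hvx.comp continuousAt_fst)
    have h1 : {q : EuclideanSpace ℝ (Fin n) × ℝ | q.1 ∈ ball (0 : EuclideanSpace ℝ (Fin n)) 2} ∈ nhds (x, s) :=
      continuous_fst.continuousAt.preimage_mem_nhds (isOpen_ball.mem_nhds hx)
    have h2 : {q : EuclideanSpace ℝ (Fin n) × ℝ | v q.1 < q.2} ∈ nhds (x, s) := by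
      have : Ioi (0 : ℝ) ∈ nhds (s - v x) := Ioi_mem_nhds (by linarith)
      have := hg.preimage_mem_nhds this
      filter_upwards [this] with q hq
      simpa [sub_pos] using hq
    filter_upwards [h1, h2] with q hq1 hq2
    exact ⟨hq1, hq2⟩
  have hpA : (p, v p) ∉ A := fun h => lt_irrefl _ h.2
  obtain ⟨f, hf⟩ := geometric_hahn_banach_open_point hAconv hAopen hpA
  -- decompose f
  set c : ℝ := f ((0 : EuclideanSpace ℝ (Fin n)), (1 : ℝ)) with hcdef
  have hdecomp : ∀ (x : EuclideanSpace ℝ (Fin n)) (t : ℝ), f (x, t) = f (x, 0) + t * c := by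
    intro x t
    have : (x, t) = (x, (0 : ℝ)) + t • ((0 : EuclideanSpace ℝ (Fin n)), (1 : ℝ)) := by
      simp [Prod.ext_iff]
    rw [this, map_add, map_smul, smul_eq_mul]
  have hkey : ∀ x ∈ ball (0 : EuclideanSpace ℝ (Fin n)) 2, ∀ t, v x < t → f (x, 0) + t * c < f (p, 0) + v p * c := by
    intro x hx t ht
    have := hf (x, t) ⟨hx, ht⟩
    rwa [hdecomp x t, hdecomp p (v p)] at this
  have hc0 : c < 0 := by
    have := hkey p hp (v p + 1) (by linarith)
    nlinarith [this]
  have hmain : ∀ x ∈ ball (0 : EuclideanSpace ℝ (Fin n)) 2, f (x, 0) + v x * c ≤ f (p, 0) + v p * c := by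
    intro x hx
    apply le_of_forall_pos_le_add'
    intro ε hε
    have hs : (0 : ℝ) < ε / (-c) := div_pos hε (by linarith)
    have := hkey x hx (v x + ε / (-c)) (by linarith)
    have hcc : (ε / (-c)) * c = -ε := by
      rw [div_neg, neg_mul, div_mul_cancel₀ _ (ne_of_lt hc0)]
    nlinarith [this]
  -- Riesz representation
  set φL : EuclideanSpace ℝ (Fin n) →L[ℝ] ℝ := f.comp (ContinuousLinearMap.inl ℝ (EuclideanSpace ℝ (Fin n)) ℝ) with hφdef
  set y' : EuclideanSpace ℝ (Fin n) := (InnerProductSpace.toDual ℝ (EuclideanSpace ℝ (Fin n))).symm φL with hy'def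
  refine ⟨(-c)⁻¹ • y', ?_⟩
  intro x hx
  have hrepr : (inner ℝ (x - p) y' : ℝ) = f (x, 0) - f (p, 0) := by
    rw [real_inner_comm]
    have : (inner ℝ y' (x - p) : ℝ) = φL (x - p) := InnerProductSpace.toDual_symm_apply
    rw [this]
    have : φL (x - p) = φL x - φL p := map_sub _ _ _
    rw [this]
    simp [hφdef]
  have hinner : (inner ℝ (x - p) ((-c)⁻¹ • y') : ℝ) = (-c)⁻¹ * (f (x, 0) - f (p, 0)) := by
    rw [real_inner_smul_right, hrepr]
  rw [hinner]
  have hm := hmain x hx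
  have hcpos : (0 : ℝ) < -c := by linarith
  have : (-c)⁻¹ * (f (x, 0) - f (p, 0)) ≤ v x - v p := by
    rw [inv_mul_le_iff₀ hcpos]
    nlinarith [hm]
  linarith

/-- Approximate subgradients with bounded norm are close to the true subdifferential. -/
lemma approx_subgradient_close {n : ℕ} {u : EuclideanSpace ℝ (Fin n) → ℝ}
    {p : EuclideanSpace ℝ (Fin n)} (R : ℝ) {ε : ℝ} (hε : 0 < ε) :
    ∃ η : ℝ, 0 < η ∧ ∀ y : EuclideanSpace ℝ (Fin n), ‖y‖ ≤ R →
      (∀ x ∈ ball (0 : EuclideanSpace ℝ (Fin n)) 2,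
        u p + (inner ℝ (x - p) y : ℝ) ≤ u x + η) →
      ∃ y₀ ∈ subdiff u p, ‖y - y₀‖ ≤ ε := by
  classical
  by_contra hcon
  push_neg at hcon
  -- for every η > 0 we get a bad approximate subgradient
  have hseq : ∀ m : ℕ, ∃ y : EuclideanSpace ℝ (Fin n), ‖y‖ ≤ R ∧
      (∀ x ∈ ball (0 : EuclideanSpace ℝ (Fin n)) 2,
        u p + (inner ℝ (x - p) y : ℝ) ≤ u x + 1 / (m + 1)) ∧
      ∀ y₀ ∈ subdiff u p, ε < ‖y - y₀‖ := by
    intro m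
    obtain ⟨y, hy1, hy2, hy3⟩ := hcon (1 / (m + 1 : ℝ)) (by positivity)
    exact ⟨y, hy1, hy2, fun y₀ h₀ => hy3 y₀ h₀⟩
  choose ys hys1 hys2 hys3 using hseq
  have hmem : ∀ m, ys m ∈ closedBall (0 : EuclideanSpace ℝ (Fin n)) R := by
    intro m; rw [mem_closedBall, dist_zero_right]; exact hys1 m
  obtain ⟨ylim, hylimmem, φ, hφ, hfz⟩ :=
    (isCompact_closedBall (0 : EuclideanSpace ℝ (Fin n)) R).tendsto_subseq hmem
  have hylim : ylim ∈ subdiff u p := by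
    intro x hx
    have hlhs : Tendsto (fun m => u p + (inner ℝ (x - p) (ys (φ m)) : ℝ)) atTop
        (nhds (u p + (inner ℝ (x - p) ylim : ℝ))) :=
      tendsto_const_nhds.add (Filter.Tendsto.inner tendsto_const_nhds hfz)
    have hrhs : Tendsto (fun m => u x + 1 / ((φ m : ℝ) + 1)) atTop (nhds (u x + 0)) := by
      apply tendsto_const_nhds.add
      exact tendsto_one_div_add_atTop_nhds_zero_nat.comp hφ.tendsto_atTop
    have hle : ∀ m, u p + (inner ℝ (x - p) (ys (φ m)) : ℝ) ≤ u x + 1 / ((φ m : ℝ) + 1) :=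
      fun m => hys2 (φ m) x hx
    have := le_of_tendsto_of_tendsto' hlhs hrhs hle
    simpa using this
  have hnorm : Tendsto (fun m => ‖ys (φ m) - ylim‖) atTop (nhds 0) := by
    rw [← tendsto_iff_norm_sub_tendsto_zero] at *
    exact hfz
  have hev : ∀ᶠ m in atTop, ‖ys (φ m) - ylim‖ < ε :=
    hnorm.eventually (eventually_lt_nhds hε) |>.mono (fun m hm => by simpa using hm)
  obtain ⟨m, hm⟩ := hev.exists
  exact absurd (hys3 (φ m) ylim hylim) (not_lt.2 hm.le)

/-- stability of sections under uniform convergence: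
`S^{u_k}_r(p) ⊆ S^u_{r+δ}(p)` for all `k` large and all `0 < r < 1`. -/
theorem section_stability {n : ℕ}
    (u : EuclideanSpace ℝ (Fin n) → ℝ)
    (hu : StrictConvexOn ℝ (ball 0 2) u) (hc : ContinuousOn u (ball 0 2))
    (uk : ℕ → EuclideanSpace ℝ (Fin n) → ℝ)
    (hconv : ∀ k, ConvexOn ℝ (ball 0 2) (uk k))
    (hunif : TendstoUniformlyOn uk u atTop (ball 0 2))
    (p : EuclideanSpace ℝ (Fin n)) (hp : p ∈ ball (0 : EuclideanSpace ℝ (Fin n)) 1)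
    (δ : ℝ) (hδ0 : 0 < δ) (hδ1 : δ < 1) :
    ∃ k₀ : ℕ, ∀ k ≥ k₀, ∀ r : ℝ, 0 < r → r < 1 →
      outerSection (uk k) r p ⊆ outerSection u (r + δ) p := by
  classical
  have hp1 : ‖p‖ < 1 := by rwa [mem_ball, dist_zero_right] at hp
  have hp2 : p ∈ ball (0 : EuclideanSpace ℝ (Fin n)) 2 := by rw [mem_ball, dist_zero_right]; linarith
  have hBsub : closedBall (0 : EuclideanSpace ℝ (Fin n)) (3 / 2) ⊆ ball (0 : EuclideanSpace ℝ (Fin n)) 2 := by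
    intro x hx
    rw [mem_closedBall, dist_zero_right] at hx
    rw [mem_ball, dist_zero_right]; linarith
  -- bound for |u| on the closed ball of radius 3/2
  obtain ⟨M, hM⟩ := (isCompact_closedBall (0 : EuclideanSpace ℝ (Fin n)) (3 / 2)).exists_bound_of_continuousOn
    (hc.mono hBsub)
  simp only [Real.norm_eq_abs] at hM
  have hM0 : 0 ≤ M := (abs_nonneg _).trans (hM 0 (by simp; norm_num))
  -- approximation of approximate subgradients
  obtain ⟨η, hη0, hη⟩ := approx_subgradient_close (u := u) (p := p)
    (4 * (M + 1)) (show (0:ℝ) < δ ^ 2 / 8 by positivity)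
  -- uniform closeness
  set ε₂ : ℝ := min 1 (min (η / 2) (δ ^ 2 / 8)) with hε₂def
  have hε₂0 : 0 < ε₂ := by
    have h1 : (0 : ℝ) < η / 2 := by linarith
    have h2 : (0 : ℝ) < δ ^ 2 / 8 := by positivity
    exact lt_min one_pos (lt_min h1 h2)
  obtain ⟨k₀, hk₀⟩ := eventually_atTop.1
    ((Metric.tendstoUniformlyOn_iff.1 hunif) ε₂ hε₂0)
  refine ⟨k₀, fun k hk r hr0 hr1 x hx => ?_⟩
  set v := uk k with hvdef
  have hclose : ∀ z ∈ ball (0 : EuclideanSpace ℝ (Fin n)) 2, |u z - v z| < ε₂ := by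
    intro z hz
    have := hk₀ k hk z hz
    rwa [Real.dist_eq] at this
  obtain ⟨hx1, hxs⟩ := hx
  have hx1' : ‖x‖ < 1 := by rwa [mem_ball, dist_zero_right] at hx1
  have hx2 : x ∈ ball (0 : EuclideanSpace ℝ (Fin n)) 2 := by rw [mem_ball, dist_zero_right]; linarith
  -- bound for |v| on the closed ball
  have hMv : ∀ z ∈ closedBall (0 : EuclideanSpace ℝ (Fin n)) (3 / 2), |v z| ≤ M + 1 := by
    intro z hz
    have h1 := abs_le.1 (hM z hz)
    have h2 := abs_lt.1 (hclose z (hBsub hz))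
    have hε₂1 : ε₂ ≤ 1 := min_le_left _ _
    rw [abs_le]
    constructor <;> linarith
  -- subgradients of v at p are bounded
  have hvbound : ∀ y ∈ subdiff v p, ‖y‖ ≤ 4 * (M + 1) :=
    fun y hy => subdiff_norm_le hp1 hMv hy
  -- v has a subgradient at p
  have hvne : (subdiff v p).Nonempty :=
    subdiff_nonempty (hconv k) ((hconv k).continuousOn isOpen_ball) hp2
  -- subgradients of v are η-approximate subgradients of u
  have happrox : ∀ y ∈ subdiff v p, ∀ z ∈ ball (0 : EuclideanSpace ℝ (Fin n)) 2,
      u p + (inner ℝ (z - p) y : ℝ) ≤ u z + η := by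
    intro y hy z hz
    have h1 := hy z hz
    have h2 := hclose z hz
    have h3 := hclose p hp2
    have hε₂η : ε₂ ≤ η / 2 := (min_le_right _ _).trans (min_le_left _ _)
    have := abs_lt.1 h2
    have := abs_lt.1 h3
    linarith
  -- each subgradient of v is close to a subgradient of u
  have hcloseSub : ∀ y ∈ subdiff v p, ∃ y₀ ∈ subdiff u p, ‖y - y₀‖ ≤ δ ^ 2 / 8 :=
    fun y hy => hη y (hvbound y hy) (happrox y hy)
  -- subdiff u p is nonempty
  obtain ⟨yv, hyv⟩ := id hvne
  obtain ⟨y₀', hy₀', _⟩ := hcloseSub yv hyv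
  -- bounds on subgradients of u
  have hubound : ∀ y ∈ subdiff u p, ‖y‖ ≤ 4 * M :=
    fun y hy => subdiff_norm_le hp1 hM hy
  have hxp2 : ‖x - p‖ < 2 := by
    calc ‖x - p‖ ≤ ‖x‖ + ‖p‖ := norm_sub_le _ _
      _ < 2 := by linarith
  -- bddAbove of the image for u
  have hbddu : BddAbove ((fun y => (inner ℝ (x - p) y : ℝ)) '' subdiff u p) := by
    refine ⟨2 * (4 * M), ?_⟩
    rintro z ⟨y, hy, rfl⟩
    calc (inner ℝ (x - p) y : ℝ) ≤ ‖x - p‖ * ‖y‖ := real_inner_le_norm _ _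
      _ ≤ 2 * (4 * M) := by
          apply mul_le_mul hxp2.le (hubound y hy) (norm_nonneg _) (by norm_num)
  -- sSup comparison
  have hSle : sSup ((fun y => (inner ℝ (x - p) y : ℝ)) '' subdiff v p) ≤
      sSup ((fun y => (inner ℝ (x - p) y : ℝ)) '' subdiff u p) + δ ^ 2 / 4 := by
    apply csSup_le (hvne.image _)
    rintro z ⟨y, hy, rfl⟩
    obtain ⟨y₀, hy₀, hyy₀⟩ := hcloseSub y hy
    have h1 : (inner ℝ (x - p) y : ℝ) ≤ (inner ℝ (x - p) y₀ : ℝ) + δ ^ 2 / 4 := by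
      have : (inner ℝ (x - p) y : ℝ) - (inner ℝ (x - p) y₀ : ℝ) = (inner ℝ (x - p) (y - y₀) : ℝ) := by
        rw [inner_sub_right]
      have h2 : (inner ℝ (x - p) (y - y₀) : ℝ) ≤ ‖x - p‖ * ‖y - y₀‖ := real_inner_le_norm _ _
      have h3 : ‖x - p‖ * ‖y - y₀‖ ≤ 2 * (δ ^ 2 / 8) := by
        apply mul_le_mul hxp2.le hyy₀ (norm_nonneg _) (by norm_num)
      linarith
    have h4 : (inner ℝ (x - p) y₀ : ℝ) ≤
        sSup ((fun y => (inner ℝ (x - p) y : ℝ)) '' subdiff u p) :=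
      le_csSup hbddu ⟨y₀, hy₀, rfl⟩
    linarith
  -- conclude
  refine ⟨hx1, ?_⟩
  have h5 := hclose x hx2
  have h6 := hclose p hp2
  have h7 := abs_lt.1 h5
  have h8 := abs_lt.1 h6
  have hε₂δ : ε₂ ≤ δ ^ 2 / 8 := (min_le_right _ _).trans (min_le_right _ _)
  have hsq : (r + δ) ^ 2 = r ^ 2 + 2 * r * δ + δ ^ 2 := by ring
  have hrδ : 0 < 2 * r * δ := by positivity
  calc u x ≤ v x + ε₂ := by linarith
    _ < v p + sSup ((fun y => (inner ℝ (x - p) y : ℝ)) '' subdiff v p) + r ^ 2 + ε₂ := by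
        linarith [hxs]
    _ ≤ u p + sSup ((fun y => (inner ℝ (x - p) y : ℝ)) '' subdiff u p) + (r + δ) ^ 2 := by
        rw [hsq]
        have : δ ^ 2 / 4 + 2 * ε₂ ≤ δ ^ 2 / 2 := by linarith
        linarith [hSle]
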